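/- Let T be a finite tree with edge set E and let v be a vertex with exactly one incoming edge e_1 and outgoing edge e_2, and let T\v be the tree obtained by deleting v and merging e_1, e_2 into a single edge e. Then the assignment q_e ↦ q_{e_1} + q_{e_2} and q_f ↦ q_f for f ≠ e defines a unital *-homomorphism σ_v*: D(T\v) → D(T) between the associated noncommutative dendrex algebras. -/

import Mathlib

/-- A finite directed (multi)graph. -/
structure DiGraph where
  V : Type
  E : Type
  src : E → V
  tgt : E → V

namespace DiGraph

/-- A directed path, as a list of edges `e₁ ⋯ eₙ` with `s(eᵢ) = r(eᵢ₊₁)`. -/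
def IsPath (G : DiGraph) (l : List G.E) : Prop :=
  l.Chain' fun a b => G.src a = G.tgt b

/-- A set of edges lies on a common directed path. -/
def OnCommonPath (G : DiGraph) (S : Set G.E) : Prop :=
  ∃ l : List G.E, G.IsPath l ∧ S ⊆ {e | e ∈ l}

/-- Adjacency in the underlying undirected graph. -/
def Adj (G : DiGraph) (a b : G.V) : Prop :=
  ∃ e, (G.src e = a ∧ G.tgt e = b) ∨ (G.src e = b ∧ G.tgt e = a)

/-- The underlying undirected graph is connected. -/
def Connected (G : DiGraph) : Prop := ∀ a b, Relation.ReflTransGen G.Adj a b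

/-- A finite tree: connected with exactly one more vertex than edges
(equivalently, connected and acyclic). -/
def IsTree (G : DiGraph) [Fintype G.V] [Fintype G.E] : Prop :=
  G.Connected ∧ Fintype.card G.E + 1 = Fintype.card G.V

/-- The defining relations of the noncommutative dendrex algebra `D(T)`: the generators
`q e` are positive, sum to `1`, and a product `q e₁ ⋯ q eₙ` vanishes whenever there is no
directed path traversing a set of edges containing `{e₁, …, eₙ}`. -/
def DendrexRel (G : DiGraph) [Fintype G.E] (A : Type) [Ring A] [PartialOrder A]
    (q : G.E → A) : Prop :=
  (∀ e, 0 ≤ q e) ∧ (∑ e, q e = 1) ∧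
    ∀ l : List G.E, ¬ G.OnCommonPath {e | e ∈ l} → (l.map q).prod = 0

/-- `(U, ι)` is the universal unital C*-algebra `D(T)` on the dendrex relations of `G`. -/
def IsUniversalDendrex (G : DiGraph) [Fintype G.E] (U : Type) [CStarAlgebra U]
    [PartialOrder U] [StarOrderedRing U] (ι : G.E → U) : Prop :=
  G.DendrexRel U ι ∧
    ∀ (A : Type) [CStarAlgebra A] [PartialOrder A] [StarOrderedRing A] (f : G.E → A),
      G.DendrexRel A f → ∃! θ : U →⋆ₐ[ℂ] A, ∀ e, θ (ι e) = f e

/-- The tree `T\v` obtained by deleting the vertex `v`, whose unique incoming edge is `e₁`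
and whose unique outgoing edge is `e₂`, and merging `e₁`, `e₂` into a single new edge
(represented by the `Sum.inr` summand) running from the source of `e₁` to the target of
`e₂`. -/
def delVertex (G : DiGraph) (v : G.V) (e₁ e₂ : G.E) (hne : e₁ ≠ e₂)
    (h₁ : ∀ f, G.tgt f = v → f = e₁) (h₂ : ∀ f, G.src f = v → f = e₂) : DiGraph where
  V := {w : G.V // w ≠ v}
  E := {f : G.E // f ≠ e₁ ∧ f ≠ e₂} ⊕ PUnit
  src := Sum.elim (fun f => ⟨G.src f.1, fun h => f.2.2 (h₂ f.1 h)⟩)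
    (fun _ => ⟨G.src e₁, fun h => hne (h₂ e₁ h)⟩)
  tgt := Sum.elim (fun f => ⟨G.tgt f.1, fun h => f.2.1 (h₁ f.1 h)⟩)
    (fun _ => ⟨G.tgt e₂, fun h => hne (h₁ e₂ h).symm⟩)

instance (G : DiGraph) [Fintype G.E] [DecidableEq G.E] (v : G.V) (e₁ e₂ : G.E)
    (hne : e₁ ≠ e₂) (h₁ : ∀ f, G.tgt f = v → f = e₁) (h₂ : ∀ f, G.src f = v → f = e₂) :
    Fintype (G.delVertex v e₁ e₂ hne h₁ h₂).E :=
  inferInstanceAs (Fintype ({f : G.E // f ≠ e₁ ∧ f ≠ e₂} ⊕ PUnit))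

end DiGraph

namespace Stmt19Aux

variable (G : DiGraph) [DecidableEq G.E] (v : G.V) (e₁ e₂ : G.E) (hne : e₁ ≠ e₂)
  (hin : G.tgt e₁ = v) (hout : G.src e₂ = v)
  (h₁ : ∀ f, G.tgt f = v → f = e₁) (h₂ : ∀ f, G.src f = v → f = e₂)

/-- Map an edge of `G` to an edge of `G.delVertex`. -/
def phi (a : G.E) : (G.delVertex v e₁ e₂ hne h₁ h₂).E :=
  if h : a = e₁ ∨ a = e₂ then Sum.inr PUnit.unit else Sum.inl ⟨a, not_or.mp h⟩

/-- Transform a path in `G` into a path in `G.delVertex`, merging consecutive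
occurrences of `e₂, e₁` into the single merged edge. -/
def collapse : List G.E → List (G.delVertex v e₁ e₂ hne h₁ h₂).E
  | [] => []
  | [a] => [phi G v e₁ e₂ hne h₁ h₂ a]
  | a :: b :: t =>
    if a = e₂ ∧ b = e₁ then Sum.inr PUnit.unit :: collapse t
    else phi G v e₁ e₂ hne h₁ h₂ a :: collapse (b :: t)

theorem phi_eq_inl (a : G.E) (h : a ≠ e₁ ∧ a ≠ e₂) :
    phi G v e₁ e₂ hne h₁ h₂ a = Sum.inl ⟨a, h⟩ := by
  unfold phi
  exact dif_neg (not_or.mpr h)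

theorem phi_eq_inr (a : G.E) (h : a = e₁ ∨ a = e₂) :
    phi G v e₁ e₂ hne h₁ h₂ a = Sum.inr PUnit.unit := by
  unfold phi
  exact dif_pos h

theorem mem_collapse_inl : ∀ (p : List G.E) (a : G.E), a ∈ p → ∀ (h : a ≠ e₁ ∧ a ≠ e₂),
    Sum.inl ⟨a, h⟩ ∈ collapse G v e₁ e₂ hne h₁ h₂ p
  | [], a, ha, h => by simp at ha
  | [b], a, ha, h => by
    simp only [List.mem_singleton] at ha
    subst ha
    simp [collapse, phi_eq_inl G v e₁ e₂ hne h₁ h₂ a h]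
    exact List.mem_singleton_self _
  | b :: c :: t, a, ha, h => by
    rw [collapse]
    split
    · rename_i hbc
      rcases List.mem_cons.mp ha with rfl | ha
      · exact absurd hbc.1 h.2
      rcases List.mem_cons.mp ha with rfl | ha
      · exact absurd hbc.2 h.1
      exact List.mem_cons_of_mem _ (mem_collapse_inl t a ha h)
    · rcases List.mem_cons.mp ha with rfl | ha
      · rw [phi_eq_inl G v e₁ e₂ hne h₁ h₂ a h]
        exact List.mem_cons_self
      · exact List.mem_cons_of_mem _ (mem_collapse_inl (c :: t) a ha h)

theorem mem_collapse_inr : ∀ (p : List G.E), (e₁ ∈ p ∨ e₂ ∈ p) →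
    Sum.inr PUnit.unit ∈ collapse G v e₁ e₂ hne h₁ h₂ p
  | [], h => by simp at h
  | [b], h => by
    have hb : b = e₁ ∨ b = e₂ := by
      rcases h with h | h <;> simp only [List.mem_singleton] at h <;> [exact Or.inl h.symm;
        exact Or.inr h.symm]
    simp [collapse, phi_eq_inr G v e₁ e₂ hne h₁ h₂ b hb]
    exact List.mem_singleton_self _
  | b :: c :: t, h => by
    rw [collapse]
    split
    · rename_i hbc
      by_cases ht : e₁ ∈ t ∨ e₂ ∈ t
      · exact List.mem_cons_of_mem _ (mem_collapse_inr t ht)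
      · exact List.mem_cons_self
    · rename_i hbc
      by_cases hb : b = e₁ ∨ b = e₂
      · rw [phi_eq_inr G v e₁ e₂ hne h₁ h₂ b hb]
        exact List.mem_cons_self
      · have : e₁ ∈ c :: t ∨ e₂ ∈ c :: t := by
          rcases h with h | h <;> rcases List.mem_cons.mp h with rfl | h
          · exact absurd (Or.inl rfl) hb
          · exact Or.inl h
          · exact absurd (Or.inr rfl) hb
          · exact Or.inr h
        exact List.mem_cons_of_mem _ (mem_collapse_inr (c :: t) this)

/-- The first element of `collapse (a :: t)` has target the target of `a`
(as long as `a ≠ e₁`). -/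
theorem collapse_head_tgt (a : G.E) (t : List G.E) (ha : a ≠ e₁) :
    ∃ x r, collapse G v e₁ e₂ hne h₁ h₂ (a :: t) = x :: r ∧
      ((G.delVertex v e₁ e₂ hne h₁ h₂).tgt x).1 = G.tgt a := by
  by_cases ha2 : a = e₂
  · match t with
    | [] =>
      refine ⟨_, _, rfl, ?_⟩
      rw [phi_eq_inr G v e₁ e₂ hne h₁ h₂ a (Or.inr ha2)]
      show G.tgt e₂ = G.tgt a
      rw [ha2]
    | b :: t' =>
      rw [collapse]
      split
      · refine ⟨_, _, rfl, ?_⟩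
        show G.tgt e₂ = G.tgt a
        rw [ha2]
      · refine ⟨_, _, rfl, ?_⟩
        rw [phi_eq_inr G v e₁ e₂ hne h₁ h₂ a (Or.inr ha2)]
        show G.tgt e₂ = G.tgt a
        rw [ha2]
  · have h' : a ≠ e₁ ∧ a ≠ e₂ := ⟨ha, ha2⟩
    match t with
    | [] =>
      refine ⟨_, _, rfl, ?_⟩
      rw [phi_eq_inl G v e₁ e₂ hne h₁ h₂ a h']
      rfl
    | b :: t' =>
      rw [collapse, if_neg (fun hc => ha2 hc.1)]
      refine ⟨_, _, rfl, ?_⟩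
      rw [phi_eq_inl G v e₁ e₂ hne h₁ h₂ a h']
      rfl

include hin hout in
theorem collapse_isPath : ∀ (p : List G.E), G.IsPath p →
    (G.delVertex v e₁ e₂ hne h₁ h₂).IsPath (collapse G v e₁ e₂ hne h₁ h₂ p)
  | [], _ => by simp [collapse, DiGraph.IsPath, List.Chain']
  | [a], _ => by simp [collapse, DiGraph.IsPath, List.Chain']
  | a :: b :: t, hp => by
    have hab : G.src a = G.tgt b := (List.isChain_cons_cons.mp hp).1
    have hbt : G.IsPath (b :: t) := (List.isChain_cons_cons.mp hp).2
    rw [collapse]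
    split
    · rename_i hc
      have hti : G.IsPath t := hbt.tail
      have ih := collapse_isPath t hti
      cases t with
      | nil => simp [collapse, DiGraph.IsPath, List.Chain']; exact List.isChain_singleton _
      | cons c t' =>
        have hbc : G.src b = G.tgt c := (List.isChain_cons_cons.mp hbt).1
        have hc1 : c ≠ e₁ := by
          intro h
          apply hne
          apply h₂
          rw [← hc.2, hbc, h, hin]
        obtain ⟨x, r, hxr, hx⟩ := collapse_head_tgt G v e₁ e₂ hne h₁ h₂ c t' hc1
        rw [hxr] at ih ⊢
        refine List.isChain_cons_cons.mpr ⟨?_, ih⟩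
        apply Subtype.ext
        show G.src e₁ = _
        rw [hx, ← hc.2, hbc]
    · rename_i hc
      have hb1 : b ≠ e₁ := by
        intro h
        exact hc ⟨h₂ a (by rw [hab, h, hin]), h⟩
      have ih := collapse_isPath (b :: t) hbt
      obtain ⟨x, r, hxr, hx⟩ := collapse_head_tgt G v e₁ e₂ hne h₁ h₂ b t hb1
      rw [hxr] at ih ⊢
      refine List.isChain_cons_cons.mpr ⟨?_, ih⟩
      apply Subtype.ext
      show ((G.delVertex v e₁ e₂ hne h₁ h₂).src (phi G v e₁ e₂ hne h₁ h₂ a)).1 = _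
      rw [hx]
      have ha2 : a ≠ e₂ := by
        intro h
        exact hb1 (h₁ b (by rw [← hab, h, hout]))
      by_cases ha1 : a = e₁
      · rw [phi_eq_inr G v e₁ e₂ hne h₁ h₂ a (Or.inl ha1)]
        show G.src e₁ = G.tgt b
        rw [← ha1]
        exact hab
      · rw [phi_eq_inl G v e₁ e₂ hne h₁ h₂ a ⟨ha1, ha2⟩]
        exact hab

/-- All resolutions of a word in `T\\v` to words in `T`, replacing the merged edge by
`e₁` or `e₂`. -/
def resList : List ((G.delVertex v e₁ e₂ hne h₁ h₂).E) → List (List G.E)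
  | [] => [[]]
  | Sum.inl a :: t => (resList t).map (a.1 :: ·)
  | Sum.inr _ :: t => (resList t).map (e₁ :: ·) ++ (resList t).map (e₂ :: ·)

theorem prod_map_eq_sum_resList (U : Type) [Ring U] (q : G.E → U) :
    ∀ l : List ((G.delVertex v e₁ e₂ hne h₁ h₂).E),
      (l.map (Sum.elim (fun a => q a.1) (fun _ => q e₁ + q e₂))).prod =
        ((resList G v e₁ e₂ hne h₁ h₂ l).map (fun m => (m.map q).prod)).sum
  | [] => by simp [resList]; exact List.prod_nil
  | Sum.inl a :: t => by
    erw [List.map_cons, List.prod_cons, prod_map_eq_sum_resList U q t, resList,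
      List.map_map]
    have : ((fun m => (m.map q).prod) ∘ (a.1 :: ·)) = fun m => q a.1 * (m.map q).prod := by
      funext m
      simp
    rw [this, List.sum_map_mul_left]
    rfl
  | Sum.inr u :: t => by
    erw [List.map_cons, List.prod_cons, prod_map_eq_sum_resList U q t, resList,
      List.map_append, List.sum_append, List.map_map, List.map_map]
    have h1 : ((fun m => (m.map q).prod) ∘ (e₁ :: ·)) = fun m => q e₁ * (m.map q).prod := by
      funext m
      simp
    have h2 : ((fun m => (m.map q).prod) ∘ (e₂ :: ·)) = fun m => q e₂ * (m.map q).prod := by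
      funext m
      simp
    rw [h1, h2, List.sum_map_mul_left, List.sum_map_mul_left]
    show (q e₁ + q e₂) * _ = _
    rw [add_mul]

theorem resList_mem_inl : ∀ (l : List ((G.delVertex v e₁ e₂ hne h₁ h₂).E))
    (m : List G.E), m ∈ resList G v e₁ e₂ hne h₁ h₂ l →
    ∀ a, Sum.inl a ∈ l → a.1 ∈ m
  | [], m, hm, a, ha => by cases ha
  | Sum.inl b :: t, m, hm, a, ha => by
    rw [resList, List.mem_map] at hm
    obtain ⟨m', hm', rfl⟩ := hm
    rcases List.mem_cons.mp ha with h | h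
    · rw [Sum.inl.injEq] at h
      subst h
      exact List.mem_cons_self
    · exact List.mem_cons_of_mem _ (resList_mem_inl t m' hm' a h)
  | Sum.inr u :: t, m, hm, a, ha => by
    rw [resList, List.mem_append, List.mem_map, List.mem_map] at hm
    have ha' : Sum.inl a ∈ t := by
      rcases List.mem_cons.mp ha with h | h
      · exact absurd h (by simp)
      · exact h
    rcases hm with ⟨m', hm', rfl⟩ | ⟨m', hm', rfl⟩ <;>
      exact List.mem_cons_of_mem _ (resList_mem_inl t m' hm' a ha')

theorem resList_mem_inr : ∀ (l : List ((G.delVertex v e₁ e₂ hne h₁ h₂).E))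
    (m : List G.E), m ∈ resList G v e₁ e₂ hne h₁ h₂ l →
    Sum.inr PUnit.unit ∈ l → e₁ ∈ m ∨ e₂ ∈ m
  | [], m, hm, ha => by cases ha
  | Sum.inl b :: t, m, hm, ha => by
    rw [resList, List.mem_map] at hm
    obtain ⟨m', hm', rfl⟩ := hm
    have ha' : Sum.inr PUnit.unit ∈ t := by
      rcases List.mem_cons.mp ha with h | h
      · exact absurd h (by simp)
      · exact h
    rcases resList_mem_inr t m' hm' ha' with h | h
    · exact Or.inl (List.mem_cons_of_mem _ h)
    · exact Or.inr (List.mem_cons_of_mem _ h)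
  | Sum.inr u :: t, m, hm, ha => by
    rw [resList, List.mem_append, List.mem_map, List.mem_map] at hm
    rcases hm with ⟨m', hm', rfl⟩ | ⟨m', hm', rfl⟩
    · exact Or.inl (List.mem_cons_self)
    · exact Or.inr (List.mem_cons_self)

end Stmt19Aux

/-- Let `T` be a finite tree with a vertex `v` having exactly one incoming
edge `e₁` and exactly one outgoing edge `e₂`, and let `T\v` be the tree obtained by deleting
`v` and merging `e₁`, `e₂` into a single edge `e`.  Then the assignment `q e ↦ q e₁ + q e₂`
and `q f ↦ q f` for `f ≠ e` defines a unital ∗-homomorphism `σ_v^* : D(T\v) → D(T)` of the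
associated noncommutative dendrex algebras. -/
theorem stmt19 (G : DiGraph) [Fintype G.V] [Fintype G.E] [DecidableEq G.E]
    (htree : G.IsTree) (v : G.V) (e₁ e₂ : G.E) (hne : e₁ ≠ e₂)
    (hin : G.tgt e₁ = v) (hout : G.src e₂ = v)
    (h₁ : ∀ f, G.tgt f = v → f = e₁) (h₂ : ∀ f, G.src f = v → f = e₂)
    (U : Type) [CStarAlgebra U] [PartialOrder U] [StarOrderedRing U]
    (ι : G.E → U) (hU : G.IsUniversalDendrex U ι)
    (U' : Type) [CStarAlgebra U'] [PartialOrder U'] [StarOrderedRing U']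
    (ι' : (G.delVertex v e₁ e₂ hne h₁ h₂).E → U')
    (hU' : (G.delVertex v e₁ e₂ hne h₁ h₂).IsUniversalDendrex U' ι') :
    ∃ θ : U' →⋆ₐ[ℂ] U,
      θ (ι' (Sum.inr PUnit.unit)) = ι e₁ + ι e₂ ∧
      ∀ f : {f : G.E // f ≠ e₁ ∧ f ≠ e₂}, θ (ι' (Sum.inl f)) = ι f.1 := by
  classical
  obtain ⟨⟨hpos, hsum, hrel⟩, -⟩ := hU
  set f : (G.delVertex v e₁ e₂ hne h₁ h₂).E → U :=
    Sum.elim (fun a => ι a.1) (fun _ => ι e₁ + ι e₂) with hf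
  have hfpos : ∀ x, 0 ≤ f x := by
    rintro (a | u)
    · exact hpos a.1
    · exact add_nonneg (hpos e₁) (hpos e₂)
  have hfsum : ∑ x, f x = 1 := by
    rw [show (∑ x, f x) = ∑ x : {f : G.E // f ≠ e₁ ∧ f ≠ e₂} ⊕ PUnit, f x from rfl,
      Fintype.sum_sum_type]
    have hsub : ∑ a : {f : G.E // f ≠ e₁ ∧ f ≠ e₂}, ι a.1
        = ∑ e ∈ Finset.univ \ {e₁, e₂}, ι e := by
      rw [Finset.sum_subtype (p := fun x => x ≠ e₁ ∧ x ≠ e₂) (Finset.univ \ {e₁, e₂})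
        (by intro x; simp [not_or]) ι]
    calc (∑ a : {f : G.E // f ≠ e₁ ∧ f ≠ e₂}, f (Sum.inl a)) + ∑ u : PUnit, f (Sum.inr u)
        = (∑ e ∈ Finset.univ \ {e₁, e₂}, ι e) + ∑ e ∈ ({e₁, e₂} : Finset G.E), ι e := by
          rw [← hsub, Finset.sum_pair hne]
          simp [hf]
      _ = ∑ e, ι e := Finset.sum_sdiff (Finset.subset_univ _)
      _ = 1 := hsum
  have hfrel : ∀ l : List (G.delVertex v e₁ e₂ hne h₁ h₂).E,
      ¬ (G.delVertex v e₁ e₂ hne h₁ h₂).OnCommonPath {e | e ∈ l} → (l.map f).prod = 0 := by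
    intro l hl
    erw [hf, Stmt19Aux.prod_map_eq_sum_resList G v e₁ e₂ hne h₁ h₂ U ι l]
    apply List.sum_eq_zero
    intro x hx
    rw [List.mem_map] at hx
    obtain ⟨m, hm, rfl⟩ := hx
    apply hrel
    rintro ⟨p, hp, hsubp⟩
    apply hl
    refine ⟨Stmt19Aux.collapse G v e₁ e₂ hne h₁ h₂ p,
      Stmt19Aux.collapse_isPath G v e₁ e₂ hne hin hout h₁ h₂ p hp, ?_⟩
    rintro (a | u) hx'
    · have ha : a.1 ∈ m := Stmt19Aux.resList_mem_inl G v e₁ e₂ hne h₁ h₂ l m hm a hx'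
      have hap : a.1 ∈ p := hsubp ha
      exact Stmt19Aux.mem_collapse_inl G v e₁ e₂ hne h₁ h₂ p a.1 hap a.2
    · cases u
      rcases Stmt19Aux.resList_mem_inr G v e₁ e₂ hne h₁ h₂ l m hm hx' with h | h
      · exact Stmt19Aux.mem_collapse_inr G v e₁ e₂ hne h₁ h₂ p (Or.inl (hsubp h))
      · exact Stmt19Aux.mem_collapse_inr G v e₁ e₂ hne h₁ h₂ p (Or.inr (hsubp h))
  obtain ⟨θ, hθ, -⟩ := hU'.2 U f ⟨hfpos, hfsum, hfrel⟩
  exact ⟨θ, hθ _, fun a => hθ _⟩
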